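/- Let X be a real or complex Hilbert space and let P : X → X be a bounded self-adjoint linear operator with ⟪Px, x⟫ ≥ m‖x‖² for all x ∈ X and some m > 0. Then there exist n ∈ ℕ with n ≥ 1 and a bounded self-adjoint linear operator Q : X → X such that Qⁿ = P, ⟪Qx, x⟫ ≥ m'‖x‖² for all x ∈ X and some m' > 0, and ‖I − Q‖ < 1/2. -/

import Mathlib

open scoped InnerProductSpace
open RCLike

section helpers
variable {𝕜 : Type*} [RCLike 𝕜] {X : Type*} [NormedAddCommGroup X] [InnerProductSpace 𝕜 X]

/-- coercivity from `‖1 - Q‖ ≤ 1/2`. -/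
lemma coer_of_norm (Q : X →L[𝕜] X) (h : ‖(1 : X →L[𝕜] X) - Q‖ ≤ 1/2) (x : X) :
    (1/2 : ℝ) * ‖x‖ ^ 2 ≤ re (inner 𝕜 (Q x) x : 𝕜) := by
  have h1 : re (inner 𝕜 (((1 : X →L[𝕜] X) - Q) x) x : 𝕜) = ‖x‖^2 - re (inner 𝕜 (Q x) x : 𝕜) := by
    rw [ContinuousLinearMap.sub_apply, inner_sub_left, map_sub, ContinuousLinearMap.one_apply,
      inner_self_eq_norm_sq]
  have h2 : re (inner 𝕜 (((1 : X →L[𝕜] X) - Q) x) x : 𝕜) ≤ (1/2) * ‖x‖^2 := by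
    calc re (inner 𝕜 (((1 : X →L[𝕜] X) - Q) x) x : 𝕜) ≤ ‖(inner 𝕜 (((1 : X →L[𝕜] X) - Q) x) x : 𝕜)‖ :=
          RCLike.re_le_norm _
      _ ≤ ‖((1 : X →L[𝕜] X) - Q) x‖ * ‖x‖ := norm_inner_le_norm _ _
      _ ≤ (‖(1 : X →L[𝕜] X) - Q‖ * ‖x‖) * ‖x‖ := by
          gcongr; exact ContinuousLinearMap.le_opNorm _ _
      _ ≤ (1/2) * ‖x‖^2 := by nlinarith [norm_nonneg x, norm_nonneg ((1 : X →L[𝕜] X) - Q)]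
  linarith

end helpers

section cplx
variable {V : Type*} [NormedAddCommGroup V] [InnerProductSpace ℂ V] [CompleteSpace V]

/-- spectrum lower bound for coercive selfadjoint operators. -/
lemma spectrum_lower (T : V →L[ℂ] V) {c : ℝ} (hc : 0 < c)
    (h : ∀ x, c * ‖x‖ ^ 2 ≤ re (inner ℂ (T x) x : ℂ)) :
    spectrum ℝ T ⊆ Set.Ici c := by
  intro r hr
  by_contra hrc
  simp only [Set.mem_Ici, not_le] at hrc
  have hunit : IsUnit (T - algebraMap ℝ (V →L[ℂ] V) r) := by
    have hcr : (0 : ℝ) < c - r := by linarith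
    refine ContinuousLinearMap.isUnit_of_forall_le_norm_inner_map _ (c := ⟨c - r, hcr.le⟩) hcr
      fun x => ?_
    have halg : re (inner ℂ ((algebraMap ℝ (V →L[ℂ] V) r) x) x : ℂ) = r * ‖x‖^2 := by
      rw [Algebra.algebraMap_eq_smul_one]
      simp only [ContinuousLinearMap.smul_apply, ContinuousLinearMap.one_apply]
      rw [← Complex.coe_smul, inner_smul_left, Complex.conj_ofReal]
      simp [inner_self_eq_norm_sq, ← Complex.ofReal_pow]
    have key : (c - r) * ‖x‖^2 ≤ re (inner ℂ ((T - algebraMap ℝ (V →L[ℂ] V) r) x) x : ℂ) := by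
      rw [ContinuousLinearMap.sub_apply, inner_sub_left, map_sub, halg]
      have := h x
      nlinarith
    calc ‖x‖^2 * ((⟨c - r, hcr.le⟩ : NNReal) : ℝ) = (c - r) * ‖x‖^2 := by push_cast; ring
      _ ≤ re (inner ℂ ((T - algebraMap ℝ (V →L[ℂ] V) r) x) x : ℂ) := key
      _ ≤ ‖(inner ℂ ((T - algebraMap ℝ (V →L[ℂ] V) r) x) x : ℂ)‖ := RCLike.re_le_norm _
  rw [spectrum.mem_iff] at hr
  exact hr (by simpa using hunit.neg)

end cplx

section cplx2
variable {V : Type*} [NormedAddCommGroup V] [InnerProductSpace ℂ V] [CompleteSpace V]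

lemma tendsto_rpow_one_div {c : ℝ} (hc : 0 < c) :
    Filter.Tendsto (fun n : ℕ => c ^ ((n : ℝ)⁻¹)) Filter.atTop (nhds 1) := by
  have hinv : Filter.Tendsto (fun n : ℕ => ((n : ℝ))⁻¹) Filter.atTop (nhds 0) :=
    tendsto_inv_atTop_zero.comp tendsto_natCast_atTop_atTop
  have h0 : Filter.Tendsto (fun n : ℕ => Real.log c * (n : ℝ)⁻¹) Filter.atTop (nhds 0) := by
    have := hinv.const_mul (Real.log c)
    rwa [mul_zero] at this
  have h1 := (Real.continuous_exp.tendsto 0).comp h0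
  rw [Real.exp_zero] at h1
  exact h1.congr fun n => (Real.rpow_def_of_pos hc _).symm

lemma root_unique {n : ℕ} (hn : n ≠ 0) (A B : V →L[ℂ] V)
    (hA : A.IsPositive) (hB : B.IsPositive) (h : A ^ n = B ^ n) : A = B := by
  have key : ∀ C : V →L[ℂ] V, C.IsPositive →
      cfc (fun x : ℝ => (x ^ ((n : ℝ)⁻¹) : ℝ)) (C ^ n) = C := by
    intro C hC
    have hC0 : (0 : V →L[ℂ] V) ≤ C := (ContinuousLinearMap.nonneg_iff_isPositive C).mpr hC
    have hsa : IsSelfAdjoint C := hC.isSelfAdjoint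
    rw [← cfc_comp_pow (fun x : ℝ => x ^ ((n : ℝ)⁻¹)) n C
      ((Real.continuous_rpow_const (by positivity)).continuousOn) hsa]
    calc cfc (fun x : ℝ => (x ^ n : ℝ) ^ ((n : ℝ)⁻¹)) C = cfc (id : ℝ → ℝ) C := by
          refine cfc_congr fun x hx => ?_
          have hx0 : (0 : ℝ) ≤ x := spectrum_nonneg_of_nonneg hC0 hx
          rw [← Real.rpow_natCast x n, ← Real.rpow_mul hx0]
          rw [mul_inv_cancel₀ (by exact_mod_cast hn), Real.rpow_one, id]
      _ = C := cfc_id ℝ C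
  rw [← key A hA, ← key B hB, h]

lemma cplx_root (P : V →L[ℂ] V) (hPsa : IsSelfAdjoint P) (m : ℝ) (hm : 0 < m)
    (hcoer : ∀ x, m * ‖x‖ ^ 2 ≤ re (inner ℂ (P x) x : ℂ)) :
    ∃ (n : ℕ) (Q : V →L[ℂ] V), 1 ≤ n ∧ IsSelfAdjoint Q ∧ Q ^ n = P ∧
      ‖(1 : V →L[ℂ] V) - Q‖ < 1/2 := by
  rcases subsingleton_or_nontrivial V with hV | hV
  · refine ⟨1, P, le_refl 1, hPsa, pow_one P, ?_⟩
    rw [Subsingleton.elim ((1 : V →L[ℂ] V) - P) 0, norm_zero]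
    norm_num
  set mm : ℝ := min m 1 with hmm_def
  set M : ℝ := max ‖P‖ 1 with hM_def
  have hmm : 0 < mm := lt_min hm one_pos
  have hmM : mm ≤ M := le_trans (min_le_right _ _) (le_max_right _ _)
  have hspec : spectrum ℝ P ⊆ Set.Icc mm M := by
    intro r hr
    refine ⟨spectrum_lower P hmm (fun x => le_trans ?_ (hcoer x)) hr, ?_⟩
    · have : (0:ℝ) ≤ ‖x‖^2 := by positivity
      nlinarith [min_le_left m (1:ℝ)]
    · exact le_trans (le_trans (le_abs_self r) (spectrum.norm_le_norm_of_mem hr))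
        (le_max_left _ _)
  -- choose n
  obtain ⟨n, ⟨⟨hn2, hn3⟩, hn4, hn5⟩, hn1⟩ :=
    (((tendsto_rpow_one_div hmm).eventually
        (Ioo_mem_nhds (show (2/3:ℝ) < 1 by norm_num) (show (1:ℝ) < 3/2 by norm_num))).and
      ((tendsto_rpow_one_div (lt_of_lt_of_le hmm hmM)).eventually
        (Ioo_mem_nhds (show (2/3:ℝ) < 1 by norm_num) (show (1:ℝ) < 3/2 by norm_num)))).and
      (Filter.eventually_ge_atTop 1) |>.exists
  have hq0 : (0:ℝ) ≤ (n : ℝ)⁻¹ := by positivity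
  have hcont : Continuous (fun x : ℝ => x ^ ((n : ℝ)⁻¹)) := Real.continuous_rpow_const hq0
  refine ⟨n, cfc (fun x : ℝ => x ^ ((n : ℝ)⁻¹)) P, hn1, cfc_predicate _ P, ?_, ?_⟩
  · rw [← cfc_pow (fun x : ℝ => x ^ ((n : ℝ)⁻¹)) n P hcont.continuousOn hPsa]
    calc cfc (fun x : ℝ => (x ^ ((n : ℝ)⁻¹)) ^ n) P = cfc (id : ℝ → ℝ) P := by
          refine cfc_congr fun x hx => ?_
          have hx0 : (0:ℝ) < x := lt_of_lt_of_le hmm (hspec hx).1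
          rw [← Real.rpow_natCast (x ^ ((n : ℝ)⁻¹)) n, ← Real.rpow_mul hx0.le]
          rw [inv_mul_cancel₀ (by exact_mod_cast Nat.one_le_iff_ne_zero.mp hn1),
            Real.rpow_one, id]
      _ = P := cfc_id ℝ P
  · have hrw : (1 : V →L[ℂ] V) - cfc (fun x : ℝ => x ^ ((n : ℝ)⁻¹)) P
        = cfc (fun x : ℝ => 1 - x ^ ((n : ℝ)⁻¹)) P := by
      rw [cfc_sub (fun _ : ℝ => (1:ℝ)) (fun x : ℝ => x ^ ((n : ℝ)⁻¹)) P
        continuousOn_const hcont.continuousOn, cfc_const_one ℝ P]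
    rw [hrw]
    refine norm_cfc_lt (by norm_num) fun x hx => ?_
    obtain ⟨hx1, hx2⟩ := hspec hx
    have hb1 : mm ^ ((n : ℝ)⁻¹) ≤ x ^ ((n : ℝ)⁻¹) := Real.rpow_le_rpow hmm.le hx1 hq0
    have hb2 : x ^ ((n : ℝ)⁻¹) ≤ M ^ ((n : ℝ)⁻¹) :=
      Real.rpow_le_rpow (le_trans hmm.le hx1) hx2 hq0
    rw [Real.norm_eq_abs, abs_lt]
    constructor <;> nlinarith

end cplx2


section complexify
variable {E : Type*} [NormedAddCommGroup E] [InnerProductSpace ℝ E]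

noncomputable instance cxSMul : SMul ℂ (WithLp 2 (E × E)) :=
  ⟨fun z v => (WithLp.equiv 2 (E × E)).symm
    (z.re • v.fst - z.im • v.snd, z.im • v.fst + z.re • v.snd)⟩

@[simp] lemma csmul_fst (z : ℂ) (v : WithLp 2 (E × E)) :
    (z • v).fst = z.re • v.fst - z.im • v.snd := rfl
@[simp] lemma csmul_snd (z : ℂ) (v : WithLp 2 (E × E)) :
    (z • v).snd = z.im • v.fst + z.re • v.snd := rfl

lemma ext2 {v w : WithLp 2 (E × E)} (h1 : v.fst = w.fst) (h2 : v.snd = w.snd) : v = w := by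
  apply (WithLp.equiv 2 (E × E)).injective
  exact Prod.ext h1 h2

noncomputable instance cxModule : Module ℂ (WithLp 2 (E × E)) where
  one_smul v := ext2 (by simp) (by simp)
  mul_smul z w v := ext2 (by simp [Complex.mul_re, Complex.mul_im]; module)
    (by simp [Complex.mul_re, Complex.mul_im]; module)
  smul_zero z := ext2 (by simp) (by simp)
  smul_add z v w := ext2 (by simp; module) (by simp; module)
  add_smul z w v := ext2 (by simp [Complex.add_re, Complex.add_im]; module)
    (by simp [Complex.add_re, Complex.add_im]; module)
  zero_smul v := ext2 (by simp) (by simp)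

lemma cnorm_smul (z : ℂ) (v : WithLp 2 (E × E)) : ‖z • v‖ = ‖z‖ * ‖v‖ := by
  have h2 : ‖z • v‖^2 = (‖z‖ * ‖v‖)^2 := by
    rw [WithLp.prod_norm_sq_eq_of_L2, csmul_fst, csmul_snd, mul_pow,
      WithLp.prod_norm_sq_eq_of_L2]
    rw [norm_sub_sq_real, norm_add_sq_real]
    simp only [norm_smul, Real.norm_eq_abs, inner_smul_left, inner_smul_right,
      RCLike.conj_to_real, mul_pow, sq_abs]
    rw [Complex.sq_norm, Complex.normSq_apply]
    ring
  have := congrArg Real.sqrt h2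
  rwa [Real.sqrt_sq (norm_nonneg _), Real.sqrt_sq (by positivity)] at this

noncomputable instance cxNormedSpace : NormedSpace ℂ (WithLp 2 (E × E)) where
  norm_smul_le z v := (cnorm_smul z v).le

noncomputable instance cxInner : Inner ℂ (WithLp 2 (E × E)) :=
  ⟨fun v w => ⟨⟪v.fst, w.fst⟫_ℝ + ⟪v.snd, w.snd⟫_ℝ, ⟪v.fst, w.snd⟫_ℝ - ⟪v.snd, w.fst⟫_ℝ⟩⟩

@[simp] lemma cinner_re (v w : WithLp 2 (E × E)) :
    (inner ℂ v w : ℂ).re = ⟪v.fst, w.fst⟫_ℝ + ⟪v.snd, w.snd⟫_ℝ := rfl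
@[simp] lemma cinner_im (v w : WithLp 2 (E × E)) :
    (inner ℂ v w : ℂ).im = ⟪v.fst, w.snd⟫_ℝ - ⟪v.snd, w.fst⟫_ℝ := rfl

noncomputable instance cxIPS : InnerProductSpace ℂ (WithLp 2 (E × E)) where
  norm_sq_eq_re_inner v := by
    rw [WithLp.prod_norm_sq_eq_of_L2]
    simp [real_inner_self_eq_norm_sq]
  conj_inner_symm v w := by
    apply Complex.ext
    · simp [real_inner_comm]
    · simp [real_inner_comm w.fst, real_inner_comm w.snd]
  add_left u v w := by
    apply Complex.ext <;> simp [inner_add_left] <;> ring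
  smul_left v w z := by
    apply Complex.ext
    · simp [inner_sub_left, inner_add_left, real_inner_smul_left, Complex.mul_re]
      ring
    · simp [inner_sub_left, inner_add_left, real_inner_smul_left, Complex.mul_im]
      ring

end complexify

section lifts
variable {E : Type*} [NormedAddCommGroup E] [InnerProductSpace ℝ E]

/-- lift of an operator to the complexification -/
noncomputable def liftR (T : E →L[ℝ] E) : WithLp 2 (E × E) →L[ℝ] WithLp 2 (E × E) :=
  ((WithLp.prodContinuousLinearEquiv 2 ℝ E E).symm : E × E →L[ℝ] WithLp 2 (E × E)) ∘L
    (T.prodMap T) ∘L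
    ((WithLp.prodContinuousLinearEquiv 2 ℝ E E) : WithLp 2 (E × E) →L[ℝ] E × E)

@[simp] lemma liftR_fst (T : E →L[ℝ] E) (v : WithLp 2 (E × E)) :
    (liftR T v).fst = T v.fst := rfl
@[simp] lemma liftR_snd (T : E →L[ℝ] E) (v : WithLp 2 (E × E)) :
    (liftR T v).snd = T v.snd := rfl

lemma smul_decomp (z : ℂ) (v : WithLp 2 (E × E)) :
    z • v = z.re • v + z.im • (Complex.I • v) := by
  apply ext2 <;> simp <;> module

/-- upgrade an `ℝ`-linear map commuting with `I`-smul to a `ℂ`-linear map. -/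
noncomputable def mkC (T : WithLp 2 (E × E) →L[ℝ] WithLp 2 (E × E))
    (h : ∀ v, T (Complex.I • v) = Complex.I • T v) :
    WithLp 2 (E × E) →L[ℂ] WithLp 2 (E × E) :=
  { toFun := T
    map_add' := map_add T
    map_smul' := by
      intro z v
      simp only [RingHom.id_apply]
      rw [smul_decomp z v, map_add, map_smul, map_smul, h, smul_decomp z (T v)]
    cont := T.continuous }

@[simp] lemma mkC_apply (T : WithLp 2 (E × E) →L[ℝ] WithLp 2 (E × E)) (h) (v) :
    mkC T h v = T v := rfl

lemma liftR_I_smul (T : E →L[ℝ] E) (v : WithLp 2 (E × E)) :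
    liftR T (Complex.I • v) = Complex.I • liftR T v := by
  apply ext2 <;> simp

/-- `ℂ`-linear lift -/
noncomputable def liftC (T : E →L[ℝ] E) : WithLp 2 (E × E) →L[ℂ] WithLp 2 (E × E) :=
  mkC (liftR T) (liftR_I_smul T)

@[simp] lemma liftC_fst (T : E →L[ℝ] E) (v : WithLp 2 (E × E)) :
    (liftC T v).fst = T v.fst := rfl
@[simp] lemma liftC_snd (T : E →L[ℝ] E) (v : WithLp 2 (E × E)) :
    (liftC T v).snd = T v.snd := rfl

/-- conjugation -/
noncomputable def conj2 : WithLp 2 (E × E) →L[ℝ] WithLp 2 (E × E) :=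
  ((WithLp.prodContinuousLinearEquiv 2 ℝ E E).symm : E × E →L[ℝ] WithLp 2 (E × E)) ∘L
    ((ContinuousLinearMap.id ℝ E).prodMap (-(ContinuousLinearMap.id ℝ E))) ∘L
    ((WithLp.prodContinuousLinearEquiv 2 ℝ E E) : WithLp 2 (E × E) →L[ℝ] E × E)

@[simp] lemma conj2_fst (v : WithLp 2 (E × E)) : (conj2 v).fst = v.fst := rfl
@[simp] lemma conj2_snd (v : WithLp 2 (E × E)) : (conj2 v).snd = -v.snd := rfl

lemma conj2_conj2 (v : WithLp 2 (E × E)) : conj2 (conj2 v) = v := by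
  apply ext2 <;> simp

lemma norm_conj2 (v : WithLp 2 (E × E)) : ‖conj2 v‖ = ‖v‖ := by
  have h2 : ‖conj2 v‖^2 = ‖v‖^2 := by
    rw [WithLp.prod_norm_sq_eq_of_L2, WithLp.prod_norm_sq_eq_of_L2]
    simp
  have := congrArg Real.sqrt h2
  rwa [Real.sqrt_sq (norm_nonneg _), Real.sqrt_sq (norm_nonneg _)] at this

lemma mk2_norm (x : E) :
    ‖((WithLp.equiv 2 (E × E)).symm (x, 0) : WithLp 2 (E × E))‖ = ‖x‖ := by
  have h2 : ‖((WithLp.equiv 2 (E × E)).symm (x, 0) : WithLp 2 (E × E))‖^2 = ‖x‖^2 := by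
    rw [WithLp.prod_norm_sq_eq_of_L2]
    simp
  have := congrArg Real.sqrt h2
  rwa [Real.sqrt_sq (norm_nonneg _), Real.sqrt_sq (norm_nonneg _)] at this

end lifts

section realroot
variable {E : Type*} [NormedAddCommGroup E] [InnerProductSpace ℝ E]

instance cxTower : IsScalarTower ℝ ℂ (WithLp 2 (E × E)) := by
  refine ⟨fun r z v => ?_⟩
  apply ext2 <;>
    simp [Complex.real_smul, Complex.mul_re, Complex.mul_im, smul_smul, sub_smul, add_smul,
      smul_sub, smul_add, mul_comm]

lemma inner_conj2 (a b : WithLp 2 (E × E)) :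
    (inner ℂ (conj2 a) (conj2 b) : ℂ) = inner ℂ b a := by
  apply Complex.ext
  · simp [real_inner_comm a.fst, real_inner_comm a.snd]
  · simp [real_inner_comm a.fst, real_inner_comm a.snd]
    ring

variable [CompleteSpace E]

set_option maxHeartbeats 1000000 in
theorem real_root (P : E →L[ℝ] E) (hsym : ∀ x y : E, ⟪P x, y⟫_ℝ = ⟪x, P y⟫_ℝ)
    (m : ℝ) (hm : 0 < m) (hcoer : ∀ x, m * ‖x‖ ^ 2 ≤ ⟪P x, x⟫_ℝ) :
    ∃ (n : ℕ) (Q : E →L[ℝ] E), 1 ≤ n ∧ (∀ x y : E, ⟪Q x, y⟫_ℝ = ⟪x, Q y⟫_ℝ) ∧ Q ^ n = P ∧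
      ‖(1 : E →L[ℝ] E) - Q‖ < 1/2 ∧
      ∀ J : E →L[ℝ] E, (∀ x y : E, ⟪J x, J y⟫_ℝ = ⟪x, y⟫_ℝ) → J ∘L J = -1 →
        J ∘L P = P ∘L J → J ∘L Q = Q ∘L J := by
  classical
  set Pc := liftC P with hPc_def
  have hPc_sym : ∀ v w : WithLp 2 (E × E), (inner ℂ (Pc v) w : ℂ) = inner ℂ v (Pc w) := by
    intro v w
    apply Complex.ext <;> simp [hPc_def, hsym]
  have hPcsa : IsSelfAdjoint Pc :=
    ContinuousLinearMap.isSelfAdjoint_iff_isSymmetric.mpr fun v w => hPc_sym v w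
  have hPc_coer : ∀ v : WithLp 2 (E × E), m * ‖v‖ ^ 2 ≤ RCLike.re (inner ℂ (Pc v) v : ℂ) := by
    intro v
    rw [WithLp.prod_norm_sq_eq_of_L2]
    have h1 := hcoer v.fst
    have h2 := hcoer v.snd
    simp only [RCLike.re_to_complex, cinner_re, hPc_def, liftC_fst, liftC_snd]
    linarith
  obtain ⟨n, Qc, hn1, hQcsa, hQcpow, hQcnorm⟩ := cplx_root Pc hPcsa m hm hPc_coer
  have hn0 : n ≠ 0 := Nat.one_le_iff_ne_zero.mp hn1
  have hQc_coer : ∀ v, (1/2 : ℝ) * ‖v‖ ^ 2 ≤ RCLike.re (inner ℂ (Qc v) v : ℂ) :=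
    coer_of_norm Qc hQcnorm.le
  have hQcpos : Qc.IsPositive := by
    refine ⟨ContinuousLinearMap.isSelfAdjoint_iff_isSymmetric.mp hQcsa, fun v => ?_⟩
    have := hQc_coer v
    have h0 : (0:ℝ) ≤ (1/2 : ℝ) * ‖v‖ ^ 2 := by positivity
    exact le_trans h0 this
  have hQc_symm : ∀ v w, (inner ℂ (Qc v) w : ℂ) = inner ℂ v (Qc w) :=
    fun v w => ContinuousLinearMap.isSelfAdjoint_iff_isSymmetric.mp hQcsa v w
  -- conjugation symmetry
  have hconjI : ∀ v, (conj2 ∘L (Qc.restrictScalars ℝ) ∘L conj2) (Complex.I • v)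
      = Complex.I • (conj2 ∘L (Qc.restrictScalars ℝ) ∘L conj2) v := by
    intro v
    have h1 : conj2 (Complex.I • v) = -(Complex.I • conj2 v) := by apply ext2 <;> simp
    have h2 : ∀ u : WithLp 2 (E × E), conj2 (-(Complex.I • u)) = Complex.I • conj2 u := by
      intro u; apply ext2 <;> simp
    simp only [ContinuousLinearMap.comp_apply, ContinuousLinearMap.coe_restrictScalars']
    rw [h1, map_neg, map_smul, ← h2 (Qc (conj2 v))]
  set R1 : WithLp 2 (E × E) →L[ℂ] WithLp 2 (E × E) :=
    mkC (conj2 ∘L (Qc.restrictScalars ℝ) ∘L conj2) hconjI with hR1_def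
  have hR1_apply : ∀ v, R1 v = conj2 (Qc (conj2 v)) := fun v => rfl
  have hR1sym : ∀ v w, (inner ℂ (R1 v) w : ℂ) = inner ℂ v (R1 w) := by
    intro v w
    rw [hR1_apply, hR1_apply]
    calc (inner ℂ (conj2 (Qc (conj2 v))) w : ℂ)
        = inner ℂ (conj2 (Qc (conj2 v))) (conj2 (conj2 w)) := by rw [conj2_conj2]
      _ = inner ℂ (conj2 w) (Qc (conj2 v)) := inner_conj2 _ _
      _ = inner ℂ (Qc (conj2 w)) (conj2 v) := (hQc_symm _ _).symm
      _ = inner ℂ (conj2 (conj2 v)) (conj2 (Qc (conj2 w))) := (inner_conj2 _ _).symm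
      _ = inner ℂ v (conj2 (Qc (conj2 w))) := by rw [conj2_conj2]
  have hR1pos : R1.IsPositive := by
    refine ⟨fun v w => hR1sym v w,
      fun v => ?_⟩
    have hcalc : (inner ℂ (R1 v) v : ℂ) = inner ℂ (conj2 v) (Qc (conj2 v)) :=
      calc (inner ℂ (R1 v) v : ℂ)
          = inner ℂ (conj2 (Qc (conj2 v))) (conj2 (conj2 v)) := by rw [hR1_apply, conj2_conj2]
        _ = inner ℂ (conj2 v) (Qc (conj2 v)) := inner_conj2 _ _
    have h2 := hQc_coer (conj2 v)
    have h0 : (0:ℝ) ≤ (1/2 : ℝ) * ‖conj2 v‖ ^ 2 := by positivity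
    have h3 : RCLike.re (inner ℂ (R1 v) v : ℂ) = RCLike.re (inner ℂ (Qc (conj2 v)) (conj2 v) : ℂ) := by
      rw [hcalc]
      exact inner_re_symm _ _
    calc (0:ℝ) ≤ RCLike.re (inner ℂ (Qc (conj2 v)) (conj2 v) : ℂ) := le_trans h0 h2
      _ = R1.reApplyInnerSelf v := h3.symm
  have hR1pow : R1 ^ n = Pc := by
    have key : ∀ (k : ℕ) (v), (R1 ^ k) v = conj2 ((Qc ^ k) (conj2 v)) := by
      intro k
      induction k with
      | zero => intro v; simp [conj2_conj2]
      | succ k ih =>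
        intro v
        rw [pow_succ', pow_succ']
        simp only [ContinuousLinearMap.mul_apply]
        rw [hR1_apply, ih v, conj2_conj2]
    ext v
    rw [key n v, hQcpow]
    apply ext2 <;> simp [hPc_def]
  have hR1Qc : R1 = Qc := root_unique hn0 R1 Qc hR1pos hQcpos (hR1pow.trans hQcpow.symm)
  have hCQ : ∀ v, Qc (conj2 v) = conj2 (Qc v) := by
    intro v
    have h1 : Qc v = conj2 (Qc (conj2 v)) := by rw [← hR1_apply, hR1Qc]
    rw [h1, conj2_conj2]
  -- the real operator
  have hsnd : ∀ x : E, (Qc ((WithLp.equiv 2 (E × E)).symm (x, 0))).snd = 0 := by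
    intro x
    have hfix : conj2 ((WithLp.equiv 2 (E × E)).symm (x, 0))
        = (WithLp.equiv 2 (E × E)).symm (x, 0) := by apply ext2 <;> simp
    have h5 := hCQ ((WithLp.equiv 2 (E × E)).symm (x, 0))
    rw [hfix] at h5
    have hsnd_eq := congrArg (fun v : WithLp 2 (E × E) => v.snd) h5
    simp only [conj2_snd] at hsnd_eq
    have h6 : (2:ℝ) • (Qc ((WithLp.equiv 2 (E × E)).symm (x, 0))).snd = 0 := by
      rw [two_smul]
      nth_rewrite 1 [hsnd_eq]
      abel
    exact (smul_eq_zero.mp h6).resolve_left (by norm_num)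
  set ι : E →L[ℝ] WithLp 2 (E × E) :=
    ((WithLp.prodContinuousLinearEquiv 2 ℝ E E).symm : E × E →L[ℝ] WithLp 2 (E × E)) ∘L
      ContinuousLinearMap.inl ℝ E E with hι_def
  set π : WithLp 2 (E × E) →L[ℝ] E :=
    ContinuousLinearMap.fst ℝ E E ∘L
      ((WithLp.prodContinuousLinearEquiv 2 ℝ E E) : WithLp 2 (E × E) →L[ℝ] E × E) with hπ_def
  set S : E →L[ℝ] E := π ∘L (Qc.restrictScalars ℝ) ∘L ι with hS_def
  have hS_apply : ∀ x : E, S x = (Qc ((WithLp.equiv 2 (E × E)).symm (x, 0))).fst := fun x => rfl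
  have hQv : ∀ x : E, Qc ((WithLp.equiv 2 (E × E)).symm (x, 0))
      = (WithLp.equiv 2 (E × E)).symm (S x, 0) := by
    intro x
    apply ext2
    · simp [hS_apply]
    · simpa using hsnd x
  refine ⟨n, S, hn1, ?_, ?_, ?_, ?_⟩
  · -- symmetry
    intro x y
    have h := hQc_symm ((WithLp.equiv 2 (E × E)).symm (x, 0)) ((WithLp.equiv 2 (E × E)).symm (y, 0))
    have hre := congrArg Complex.re h
    simp only [hQv] at hre
    simpa using hre
  · -- power
    have key2 : ∀ (k : ℕ) (x : E), (Qc ^ k) ((WithLp.equiv 2 (E × E)).symm (x, 0))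
        = (WithLp.equiv 2 (E × E)).symm ((S ^ k) x, 0) := by
      intro k
      induction k with
      | zero => intro x; simp
      | succ k ih =>
        intro x
        rw [pow_succ', pow_succ']
        simp only [ContinuousLinearMap.mul_apply]
        rw [ih x, hQv]
    ext x
    have h1 := key2 n x
    rw [hQcpow] at h1
    have h2 : Pc ((WithLp.equiv 2 (E × E)).symm (x, 0))
        = (WithLp.equiv 2 (E × E)).symm (P x, 0) := by apply ext2 <;> simp [hPc_def]
    rw [h2] at h1
    have h3 := congrArg (fun v : WithLp 2 (E × E) => v.fst) h1
    simpa using h3.symm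
  · -- norm
    refine lt_of_le_of_lt (ContinuousLinearMap.opNorm_le_bound _ (norm_nonneg _) ?_) hQcnorm
    intro x
    have h1 : ((1 : WithLp 2 (E × E) →L[ℂ] WithLp 2 (E × E)) - Qc)
        ((WithLp.equiv 2 (E × E)).symm (x, 0))
        = (WithLp.equiv 2 (E × E)).symm (x - S x, 0) := by
      simp only [ContinuousLinearMap.sub_apply, ContinuousLinearMap.one_apply]
      rw [hQv]
      apply ext2 <;> simp
    have h2 : ‖x - S x‖ ≤ ‖(1 : WithLp 2 (E × E) →L[ℂ] WithLp 2 (E × E)) - Qc‖ * ‖x‖ := by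
      calc ‖x - S x‖ = ‖((1 : WithLp 2 (E × E) →L[ℂ] WithLp 2 (E × E)) - Qc)
            ((WithLp.equiv 2 (E × E)).symm (x, 0))‖ := by rw [h1, mk2_norm]
        _ ≤ ‖(1 : WithLp 2 (E × E) →L[ℂ] WithLp 2 (E × E)) - Qc‖
            * ‖((WithLp.equiv 2 (E × E)).symm (x, 0) : WithLp 2 (E × E))‖ :=
            ContinuousLinearMap.le_opNorm _ _
        _ = ‖(1 : WithLp 2 (E × E) →L[ℂ] WithLp 2 (E × E)) - Qc‖ * ‖x‖ := by rw [mk2_norm]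
    rw [ContinuousLinearMap.sub_apply, ContinuousLinearMap.one_apply]
    exact h2
  · -- J commutation
    intro J hJiso hJJ hJP
    have hJJ' : ∀ x : E, J (J x) = -x := by
      intro x
      have := ContinuousLinearMap.ext_iff.mp hJJ x
      simpa using this
    have hPJ : ∀ x : E, P (J x) = J (P x) := by
      intro x
      have h1 := ContinuousLinearMap.ext_iff.mp hJP x
      simpa using h1.symm
    set Jc := liftC J with hJc_def
    set mJc := liftC (-J) with hmJc_def
    have hJmJ : ∀ v, Jc (mJc v) = v := by
      intro v; apply ext2 <;> simp [hJc_def, hmJc_def, hJJ']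
    have hmJJ : ∀ v, mJc (Jc v) = v := by
      intro v; apply ext2 <;> simp [hJc_def, hmJc_def, hJJ']
    have hJc_inner : ∀ v w, (inner ℂ (Jc v) (Jc w) : ℂ) = inner ℂ v w := by
      intro v w; apply Complex.ext <;> simp [hJc_def, hJiso]
    have hmJc_inner : ∀ v w, (inner ℂ (mJc v) (mJc w) : ℂ) = inner ℂ v w := by
      intro v w; apply Complex.ext <;> simp [hmJc_def, hJiso]
    set R2 := mJc ∘L Qc ∘L Jc with hR2_def
    have hR2_apply : ∀ v, R2 v = mJc (Qc (Jc v)) := fun v => rfl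
    have hR2sym : ∀ v w, (inner ℂ (R2 v) w : ℂ) = inner ℂ v (R2 w) := by
      intro v w
      calc (inner ℂ (R2 v) w : ℂ) = inner ℂ (Jc (R2 v)) (Jc w) := (hJc_inner _ _).symm
        _ = inner ℂ (Qc (Jc v)) (Jc w) := by rw [hR2_apply, hJmJ]
        _ = inner ℂ (Jc v) (Qc (Jc w)) := hQc_symm _ _
        _ = inner ℂ (mJc (Jc v)) (mJc (Qc (Jc w))) := (hmJc_inner _ _).symm
        _ = inner ℂ v (R2 w) := by rw [hmJJ, hR2_apply]
    have hR2pos : R2.IsPositive := by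
      refine ⟨fun v w => hR2sym v w,
        fun v => ?_⟩
      have h1 : RCLike.re (inner ℂ (R2 v) v : ℂ)
          = RCLike.re (inner ℂ (Qc (Jc v)) (Jc v) : ℂ) := by
        have h4 : (inner ℂ (R2 v) v : ℂ) = inner ℂ (Qc (Jc v)) (Jc v) := by
          calc (inner ℂ (R2 v) v : ℂ) = inner ℂ (Jc (R2 v)) (Jc v) := (hJc_inner _ _).symm
            _ = inner ℂ (Qc (Jc v)) (Jc v) := by rw [hR2_apply, hJmJ]
        rw [h4]
      have h2 := hQc_coer (Jc v)
      have h0 : (0:ℝ) ≤ (1/2 : ℝ) * ‖Jc v‖ ^ 2 := by positivity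
      calc (0:ℝ) ≤ RCLike.re (inner ℂ (Qc (Jc v)) (Jc v) : ℂ) := le_trans h0 h2
        _ = R2.reApplyInnerSelf v := h1.symm
    have hR2pow : R2 ^ n = Pc := by
      have key3 : ∀ (k : ℕ) (v), (R2 ^ k) v = mJc ((Qc ^ k) (Jc v)) := by
        intro k
        induction k with
        | zero => intro v; simp [hmJJ v]
        | succ k ih =>
          intro v
          rw [pow_succ', pow_succ']
          simp only [ContinuousLinearMap.mul_apply]
          rw [hR2_apply, ih v, hJmJ]
      ext v
      rw [key3 n v, hQcpow]
      apply ext2 <;> simp [hPc_def, hJc_def, hmJc_def, hPJ, hJJ']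
    have hR2Qc : R2 = Qc := root_unique hn0 R2 Qc hR2pos hQcpos (hR2pow.trans hQcpow.symm)
    have hJQ : ∀ v, Jc (Qc v) = Qc (Jc v) := by
      intro v
      have h1 : Qc v = mJc (Qc (Jc v)) := by rw [← hR2_apply, hR2Qc]
      rw [h1, hJmJ]
    ext x
    have h1 : Jc ((WithLp.equiv 2 (E × E)).symm (x, 0))
        = (WithLp.equiv 2 (E × E)).symm (J x, 0) := by apply ext2 <;> simp [hJc_def]
    have h2 := hJQ ((WithLp.equiv 2 (E × E)).symm (x, 0))
    rw [h1, hQv, hQv] at h2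
    have h3 := congrArg (fun v : WithLp 2 (E × E) => v.fst) h2
    simp only [hJc_def, liftC_fst, WithLp.equiv_symm_apply, WithLp.toLp_fst] at h3
    simpa using h3
end realroot

set_option maxHeartbeats 1000000 in
/-- root-extraction step in the proof of Lemma 4.1.
A strictly coercive bounded self-adjoint operator `P` admits, for suitable `n ≥ 1`, a strictly
coercive self-adjoint `n`-th root `Q` with `‖I - Q‖ < 1/2`. -/
theorem stmt_18 {𝕜 : Type*} [RCLike 𝕜]
    {X : Type*} [NormedAddCommGroup X] [InnerProductSpace 𝕜 X] [CompleteSpace X]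
    (P : X →L[𝕜] X) (hPsa : IsSelfAdjoint P)
    (m : ℝ) (hm : 0 < m)
    (hcoer : ∀ x : X, m * ‖x‖ ^ 2 ≤ RCLike.re (inner 𝕜 (P x) x : 𝕜)) :
    ∃ (n : ℕ) (Q : X →L[𝕜] X), 1 ≤ n ∧ IsSelfAdjoint Q ∧ Q ^ n = P ∧
      (∃ m' : ℝ, 0 < m' ∧ ∀ x : X, m' * ‖x‖ ^ 2 ≤ RCLike.re (inner 𝕜 (Q x) x : 𝕜)) ∧
      ‖(1 : X →L[𝕜] X) - Q‖ < 1/2 := by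
  letI : InnerProductSpace ℝ X := InnerProductSpace.rclikeToReal 𝕜 X
  letI : IsScalarTower ℝ 𝕜 X :=
    ⟨fun r k x => by rw [Algebra.smul_def, mul_smul]; rfl⟩
  have hrinner : ∀ x y : X, ⟪x, y⟫_ℝ = RCLike.re (inner 𝕜 x y : 𝕜) := fun x y => rfl
  have hrsmul : ∀ (r : ℝ) (x : X), ((r : 𝕜)) • x = r • x := fun r x =>
    (algebraMap_smul 𝕜 r x)
  have hPsymm : ∀ x y : X, (inner 𝕜 (P x) y : 𝕜) = inner 𝕜 x (P y) :=
    fun x y => ContinuousLinearMap.isSelfAdjoint_iff_isSymmetric.mp hPsa x y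
  set Pr : X →L[ℝ] X := P.restrictScalars ℝ with hPr_def
  have hPr_apply : ∀ x : X, Pr x = P x := fun x => rfl
  have hsymR : ∀ x y : X, ⟪Pr x, y⟫_ℝ = ⟪x, Pr y⟫_ℝ := by
    intro x y
    rw [hrinner, hrinner, hPr_apply, hPr_apply, hPsymm]
  have hcoerR : ∀ x : X, m * ‖x‖ ^ 2 ≤ ⟪Pr x, x⟫_ℝ := by
    intro x
    rw [hrinner, hPr_apply]
    exact hcoer x
  obtain ⟨n, S, hn1, hSsym, hSpow, hSnorm, hJcomm⟩ := real_root Pr hsymR m hm hcoerR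
  -- commutation with multiplication by I
  set J : X →L[ℝ] X := ((RCLike.I : 𝕜) • (1 : X →L[𝕜] X)).restrictScalars ℝ with hJ_def
  have hJ_apply : ∀ x : X, J x = (RCLike.I : 𝕜) • x := by
    intro x
    simp [hJ_def]
  have hSJ : ∀ x : X, S ((RCLike.I : 𝕜) • x) = (RCLike.I : 𝕜) • S x := by
    rcases RCLike.I_mul_I_ax (K := 𝕜) with hI0 | hII
    · intro x
      rw [hI0, zero_smul, zero_smul, map_zero]
    · have hJiso : ∀ x y : X, ⟪J x, J y⟫_ℝ = ⟪x, y⟫_ℝ := by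
        intro x y
        rw [hrinner, hrinner, hJ_apply, hJ_apply, inner_smul_left, inner_smul_right,
          RCLike.conj_I]
        rw [show (-(RCLike.I : 𝕜)) * ((RCLike.I : 𝕜) * (inner 𝕜 x y : 𝕜))
            = -((RCLike.I : 𝕜) * (RCLike.I : 𝕜)) * (inner 𝕜 x y : 𝕜) by ring, hII]
        ring_nf
      have hJJ : J ∘L J = -1 := by
        ext x
        simp only [ContinuousLinearMap.comp_apply, ContinuousLinearMap.neg_apply,
          ContinuousLinearMap.one_apply]
        rw [hJ_apply, hJ_apply, smul_smul, hII, neg_one_smul]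
      have hJP : J ∘L Pr = Pr ∘L J := by
        ext x
        simp only [ContinuousLinearMap.comp_apply]
        rw [hJ_apply, hPr_apply, hPr_apply, hJ_apply, map_smul]
      have h := hJcomm J hJiso hJJ hJP
      intro x
      have h1 := ContinuousLinearMap.ext_iff.mp h x
      simp only [ContinuousLinearMap.comp_apply] at h1
      rw [hJ_apply, hJ_apply] at h1
      exact h1.symm
  -- the 𝕜-linear operator
  have hks : ∀ (k : 𝕜) (x : X),
      k • x = (RCLike.re k : ℝ) • x + (RCLike.im k : ℝ) • ((RCLike.I : 𝕜) • x) := by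
    intro k x
    rw [← hrsmul, ← hrsmul, smul_smul, ← add_smul, RCLike.re_add_im]
  set Q : X →L[𝕜] X :=
    { toFun := S
      map_add' := fun a b => map_add S a b
      map_smul' := fun k x => by
        simp only [RingHom.id_apply]
        rw [hks k x, map_add, map_smul, map_smul, hSJ, ← hks k (S x)]
      cont := S.continuous } with hQ_def
  have hQ_apply : ∀ x : X, Q x = S x := fun x => rfl
  have hQnorm : ‖(1 : X →L[𝕜] X) - Q‖ < 1/2 := by
    refine lt_of_le_of_lt (ContinuousLinearMap.opNorm_le_bound _ (norm_nonneg _) ?_) hSnorm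
    intro x
    have h1 : ((1 : X →L[𝕜] X) - Q) x = ((1 : X →L[ℝ] X) - S) x := by
      simp [hQ_apply]
    rw [h1]
    exact ContinuousLinearMap.le_opNorm _ _
  refine ⟨n, Q, hn1, ?_, ?_, ⟨1/2, by norm_num, coer_of_norm Q hQnorm.le⟩, hQnorm⟩
  · -- selfadjoint
    refine ContinuousLinearMap.isSelfAdjoint_iff_isSymmetric.mpr fun x y => ?_
    have hre : RCLike.re (inner 𝕜 (Q x) y : 𝕜) = RCLike.re (inner 𝕜 x (Q y) : 𝕜) := by
      rw [← hrinner, ← hrinner, hQ_apply, hQ_apply, hSsym]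
    have him : RCLike.im (inner 𝕜 (Q x) y : 𝕜) = RCLike.im (inner 𝕜 x (Q y) : 𝕜) := by
      have e1 : RCLike.im (inner 𝕜 (Q x) y : 𝕜)
          = -RCLike.re ((RCLike.I : 𝕜) * (inner 𝕜 (Q x) y : 𝕜)) := by
        rw [RCLike.I_mul_re]; ring
      have e2 : RCLike.im (inner 𝕜 x (Q y) : 𝕜)
          = -RCLike.re ((RCLike.I : 𝕜) * (inner 𝕜 x (Q y) : 𝕜)) := by
        rw [RCLike.I_mul_re]; ring
      rw [e1, e2, ← inner_smul_right, ← inner_smul_right, ← hrinner, ← hrinner,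
        hQ_apply, hQ_apply, ← hSJ, hSsym]
    exact RCLike.ext hre him
  · -- power
    have key : ∀ (k : ℕ) (x : X), (Q ^ k) x = (S ^ k) x := by
      intro k
      induction k with
      | zero => intro x; rfl
      | succ k ih =>
        intro x
        rw [pow_succ', pow_succ']
        simp only [ContinuousLinearMap.mul_apply]
        rw [ih x, hQ_apply]
    ext x
    rw [key n x, hSpow]
    rfl
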